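/- arXiv:1601.06254 — 4 statements merged into one kernel-verified Lean document; each statement's English description precedes it below -/
import Mathlib

section
/- Let A ⊆ L be a Lie subalgebra and ∇ : L → End(L/A) a K-linear map. Define the torsion T(l,l') = ∇_l(l' mod A) − ∇_{l'}(l mod A) − ([l,l'] mod A). Then T descends to a well-defined bilinear map (L/A) × (L/A) → L/A (i.e., T(l,l') depends only on l mod A and l' mod A) if and only if ∇ extends the A-action, i.e., ∇_a(l mod A) = [a,l] mod A for all a ∈ A, l ∈ L. -/
/-- For a Lie subalgebra `A ⊆ L` and a K-linear `∇ : L → End(L/A)`,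
the torsion `T(l,l') = ∇_l π(l') − ∇_{l'} π(l) − π[l,l']` descends to a bilinear
map `(L/A) × (L/A) → L/A` iff `∇` extends the A-action, i.e.
`∇_a π(l) = π⁅a,l⁆` for all `a ∈ A`, `l ∈ L`. -/
theorem torsion_descends_iff_extends_action
    (K : Type*) [Field K] (L : Type*) [LieRing L] [LieAlgebra K L]
    (A : LieSubalgebra K L)
    (D : L →ₗ[K] Module.End K (L ⧸ A.toSubmodule))
    (π : L →ₗ[K] L ⧸ A.toSubmodule) (hπ : π = A.toSubmodule.mkQ)
    (T : L → L → L ⧸ A.toSubmodule)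
    (hT : ∀ l l', T l l' = D l (π l') - D l' (π l) - π ⁅l, l'⁆) :
    (∀ l₁ l₂ l₁' l₂' : L, π l₁ = π l₁' → π l₂ = π l₂' → T l₁ l₂ = T l₁' l₂')
      ↔ (∀ (a : A) (l : L), D (a : L) (π l) = π ⁅(a : L), l⁆) := by
  have hker : ∀ x : L, x ∈ A → π x = 0 := by
    intro x hx
    simp [hπ, Submodule.Quotient.mk_eq_zero, hx]
  constructor
  · intro h a l
    have h0 : π (a : L) = π 0 := by simp [hker _ a.2]
    have key := h (a : L) l 0 l h0 rfl
    rw [hT, hT] at key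
    simp only [map_zero, LinearMap.zero_apply, hker _ a.2, map_zero,
      zero_sub, sub_zero, zero_lie, lie_zero] at key
    -- key : D a (π l) - π ⁅a, l⁆ = something zero
    have : D (a : L) (π l) - π ⁅(a : L), l⁆ = 0 := by
      simpa using key
    exact sub_eq_zero.mp this
  · intro h l₁ l₂ l₁' l₂' h1 h2
    have ha : l₁' - l₁ ∈ A := by
      have h0 : π (l₁' - l₁) = 0 := by rw [map_sub, h1, sub_self]
      rw [hπ, Submodule.mkQ_apply, Submodule.Quotient.mk_eq_zero] at h0
      exact h0
    have hb : l₂' - l₂ ∈ A := by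
      have h0 : π (l₂' - l₂) = 0 := by rw [map_sub, h2, sub_self]
      rw [hπ, Submodule.mkQ_apply, Submodule.Quotient.mk_eq_zero] at h0
      exact h0
    have ea : ∀ l : L, D (l₁' - l₁) (π l) = π ⁅l₁' - l₁, l⁆ := fun l => h ⟨_, ha⟩ l
    have eb : ∀ l : L, D (l₂' - l₂) (π l) = π ⁅l₂' - l₂, l⁆ := fun l => h ⟨_, hb⟩ l
    rw [hT, hT]
    have d1 : D l₁' = D l₁ + D (l₁' - l₁) := by rw [← map_add]; congr 1; abel
    have d2 : D l₂' = D l₂ + D (l₂' - l₂) := by rw [← map_add]; congr 1; abel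
    have hab : π ⁅l₁' - l₁, l₂' - l₂⁆ = 0 :=
      hker _ (A.lie_mem ha hb)
    rw [d1, d2, h1, h2]
    simp only [LinearMap.add_apply, ea, eb]
    have expand : π ⁅l₁', l₂'⁆ = π ⁅l₁, l₂⁆ + π ⁅l₁' - l₁, l₂⁆ + π ⁅l₁, l₂' - l₂⁆ + π ⁅l₁' - l₁, l₂' - l₂⁆ := by
      rw [← map_add, ← map_add, ← map_add]
      congr 1
      simp [sub_lie, lie_sub]
      abel
    rw [expand, hab]
    have hab2 : π ⁅l₂' - l₂, l₁' - l₁⁆ = 0 := hker _ (A.lie_mem hb ha)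
    have e3 : π ⁅l₁' - l₁, l₂'⁆ = π ⁅l₁' - l₁, l₂⁆ := by
      rw [show (⁅l₁' - l₁, l₂'⁆ : L) = ⁅l₁' - l₁, l₂⁆ + ⁅l₁' - l₁, l₂' - l₂⁆ by
        rw [← lie_add]; congr 1; abel, map_add, hab, add_zero]
    have e4 : π ⁅l₂' - l₂, l₁'⁆ = π ⁅l₂' - l₂, l₁⁆ := by
      rw [show (⁅l₂' - l₂, l₁'⁆ : L) = ⁅l₂' - l₂, l₁⁆ + ⁅l₂' - l₂, l₁' - l₁⁆ by
        rw [← lie_add]; congr 1; abel, map_add, hab2, add_zero]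
    have skew : π ⁅l₂' - l₂, l₁⁆ = - π ⁅l₁, l₂' - l₂⁆ := by
      rw [← map_neg, lie_skew]
    rw [e3, e4, skew]
    abel
end

section
/- Let A ⊆ L be a Lie subalgebra, E an A-module, and ∇, ∇' two K-linear maps L → End(E) both extending the A-action on E. Define At^∇ : A → Hom(L/A ⊗ E, E) by At^∇(a)(l mod A, e) = R^∇(a,l)e where R^∇ is the curvature. Then At^∇ − At^{∇'} is a coboundary in the Chevalley–Eilenberg complex of A with values in Hom(L/A ⊗ E, E); explicitly, At^∇ − At^{∇'} = d_A(β) where β ∈ Hom(L/A ⊗ E, E) is given by β(l mod A, e) = ∇_l e − ∇'_l e. -/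
/-- Let `A ⊆ L` be a Lie subalgebra, `E` an `A`-module, and
`∇, ∇'` two K-linear maps `L → End E` extending the A-action.  Then
`∇ − ∇'` descends to `β : L/A → End E` (it only depends on `l mod A`) and
`At^∇ − At^{∇'} = d_A β`, i.e. for all `a ∈ A`, `l ∈ L`, `e ∈ E`:
`R^∇(a,l)e − R^{∇'}(a,l)e = a·β(l̄,e) − β(π⁅a,l⁆,e) − β(l̄,a·e)`
(written on representatives). -/
theorem atiyah_cocycle_difference_is_coboundary
    (K : Type*) [Field K] (L : Type*) [LieRing L] [LieAlgebra K L]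
    (A : LieSubalgebra K L)
    (E : Type*) [AddCommGroup E] [Module K E]
    [LieRingModule A E] [LieModule K A E]
    (D D' : L →ₗ[K] Module.End K E)
    (hD : ∀ (a : A) (e : E), D (a : L) e = ⁅a, e⁆)
    (hD' : ∀ (a : A) (e : E), D' (a : L) e = ⁅a, e⁆)
    (R R' : L → L → Module.End K E)
    (hR : ∀ l l', R l l' = D l * D l' - D l' * D l - D ⁅l, l'⁆)
    (hR' : ∀ l l', R' l l' = D' l * D' l' - D' l' * D' l - D' ⁅l, l'⁆)
    (β : L → E →ₗ[K] E) (hβ : ∀ l, β l = D l - D' l) :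
    (∀ l l' : L, l - l' ∈ A.toSubmodule → β l = β l') ∧
    (∀ (a : A) (l : L) (e : E),
      R (a : L) l e - R' (a : L) l e
        = ⁅a, β l e⁆ - β ⁅(a : L), l⁆ e - β l ⁅a, e⁆) := by
  constructor
  · intro l l' h
    ext x
    have h1 : D ((⟨l - l', h⟩ : A) : L) x = D' ((⟨l - l', h⟩ : A) : L) x := by
      rw [hD ⟨l - l', h⟩ x, hD' ⟨l - l', h⟩ x]
    simp only [map_sub, LinearMap.sub_apply] at h1
    simp only [hβ, LinearMap.sub_apply]
    linear_combination (norm := module) h1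
  · intro a l e
    have ha : D (a : L) = D' (a : L) := by
      ext x; rw [hD a x, hD' a x]
    simp only [hR, hR', hβ, ha, ← hD' a]
    simp only [Module.End.mul_apply, LinearMap.sub_apply, map_sub]
    abel
end

section
/- With the notation of the previous statement, At^∇ is a well-defined Chevalley–Eilenberg 1-cocycle: (i) R^∇(a,l)e depends on l only through l mod A, and (ii) d_A(At^∇)(a,a') = a·(At^∇(a')) − a'·(At^∇(a)) − At^∇([a,a']) = 0 for all a,a' ∈ A. -/
/-- With `A ⊆ L` a Lie subalgebra, `E` an `A`-module and
`∇ : L → End E` K-linear extending the A-action, the Atiyah cocycle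
`At^∇(a)(l̄,e) = R^∇(a,l)e` is well defined ((i): `R^∇(a,l)e` depends only on
`l mod A`) and is a Chevalley–Eilenberg 1-cocycle ((ii): `d_A At^∇ = 0`),
written on representatives. -/
theorem atiyah_cocycle_well_defined_and_closed
    (K : Type*) [Field K] (L : Type*) [LieRing L] [LieAlgebra K L]
    (A : LieSubalgebra K L)
    (E : Type*) [AddCommGroup E] [Module K E]
    [LieRingModule A E] [LieModule K A E]
    (D : L →ₗ[K] Module.End K E)
    (hD : ∀ (a : A) (e : E), D (a : L) e = ⁅a, e⁆)
    (R : L → L → Module.End K E)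
    (hR : ∀ l l', R l l' = D l * D l' - D l' * D l - D ⁅l, l'⁆) :
    (∀ (a : A) (l l' : L), l - l' ∈ A.toSubmodule → R (a : L) l = R (a : L) l') ∧
    (∀ (a a' : A) (l : L) (e : E),
      (⁅a, R (a' : L) l e⁆ - R (a' : L) ⁅(a : L), l⁆ e - R (a' : L) l ⁅a, e⁆)
      - (⁅a', R (a : L) l e⁆ - R (a : L) ⁅(a' : L), l⁆ e - R (a : L) l ⁅a', e⁆)
      - R ((⁅a, a'⁆ : A) : L) l e = 0) := by
  have key : ∀ (a b : A) (e : E),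
      D ⁅(a : L), (b : L)⁆ e = D (a : L) (D (b : L) e) - D (b : L) (D (a : L) e) := by
    intro a b e
    have hco : ⁅(a : L), (b : L)⁆ = ((⁅a, b⁆ : A) : L) := rfl
    simp only [hco, hD]
    rw [leibniz_lie]
    abel
  constructor
  · intro a l l' hmem
    ext e
    have h2 : R (a : L) (l - l') e = 0 := by
      have hk := key a ⟨l - l', hmem⟩ e
      rw [hR]
      simp only [] at hk
      simp only [LinearMap.sub_apply, Module.End.mul_apply]
      rw [hk]
      abel
    have h1 : R (a : L) l e - R (a : L) l' e = R (a : L) (l - l') e := by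
      simp only [hR, map_sub, lie_sub, LinearMap.sub_apply, Module.End.mul_apply]
      abel
    exact sub_eq_zero.mp (h1.trans h2)
  · intro a a' l e
    have hJ : D ⁅⁅(a : L), (a' : L)⁆, l⁆ e
        = D ⁅(a : L), ⁅(a' : L), l⁆⁆ e - D ⁅(a' : L), ⁅(a : L), l⁆⁆ e := by
      rw [lie_lie, map_sub]; rfl
    have h1 := key a a' (D l e)
    have h2 := key a a' e
    have hco : ((⁅a, a'⁆ : A) : L) = ⁅(a : L), (a' : L)⁆ := rfl
    simp only [hR, hco, ← hD, LinearMap.sub_apply, Module.End.mul_apply]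
    rw [hJ, h1, h2]
    simp only [map_sub]
    abel
end

section
/- Let g = A ⊕ B be a Lie algebra direct sum of two subalgebras and ∇ : g → End(B) a linear map extending the A-action (∇_a b = pr_B[a,b]) with vanishing torsion. Then the curvature satisfies R(a,b)b' = R(a,b')b for all a ∈ A, b, b' ∈ B (symmetry of the Atiyah cocycle in the B-arguments). -/
/-- For `g = A ⊕ B` a Lie algebra direct sum of subalgebras and a
torsion-free K-linear `∇ : g → End B` extending the A-action, the curvature
satisfies `R(a,b)b' = R(a,b')b` for `a ∈ A`, `b, b' ∈ B`. -/
theorem curvature_symmetry_matched_pair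
    (K : Type*) [Field K] (L : Type*) [LieRing L] [LieAlgebra K L]
    (A B : LieSubalgebra K L)
    (hc : IsCompl A.toSubmodule B.toSubmodule)
    (prB : L →ₗ[K] B)
    (hprB : prB = B.toSubmodule.linearProjOfIsCompl A.toSubmodule hc.symm)
    (D : L →ₗ[K] Module.End K B)
    (hext : ∀ (a : A) (b : B), D (a : L) b = prB ⁅(a : L), (b : L)⁆)
    (htf : ∀ l l' : L, D l (prB l') - D l' (prB l) - prB ⁅l, l'⁆ = 0)
    (R : L → L → Module.End K B)
    (hR : ∀ l l', R l l' = D l * D l' - D l' * D l - D ⁅l, l'⁆) :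
    ∀ (a : A) (b b' : B), R (a : L) (b : L) b' = R (a : L) (b' : L) b := by
  intro a b b'
  have hfix : ∀ x : B, prB (x : L) = x := fun x => by
    rw [hprB]; exact Submodule.linearProjOfIsCompl_apply_left hc.symm x
  have htf' : ∀ (l : L) (x : B), D l x = D (x : L) (prB l) + prB ⁅l, (x : L)⁆ := by
    intro l x
    have h := htf l x
    rw [hfix] at h
    rw [sub_sub, sub_eq_zero] at h
    exact h
  have hmem : ⁅(b : L), (b' : L)⁆ ∈ B := B.lie_mem b.2 b'.2
  have hbb : prB ⁅(b : L), (b' : L)⁆ = ⟨⁅(b : L), (b' : L)⁆, hmem⟩ := hfix ⟨_, hmem⟩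
  have eq1 : D ⁅(a : L), (b : L)⁆ b'
      = D (b' : L) (D (a : L) b) + prB ⁅⁅(a : L), (b : L)⁆, (b' : L)⁆ := by
    rw [htf' ⁅(a : L), (b : L)⁆ b', hext]
  have eq2 : D ⁅(a : L), (b' : L)⁆ b
      = D (b : L) (D (a : L) b') + prB ⁅⁅(a : L), (b' : L)⁆, (b : L)⁆ := by
    rw [htf' ⁅(a : L), (b' : L)⁆ b, hext]
  have eq3 : D (b : L) b' = D (b' : L) b + prB ⁅(b : L), (b' : L)⁆ := by
    rw [htf' (b : L) b', hfix]
  have eq4 : D (a : L) (prB ⁅(b : L), (b' : L)⁆)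
      = prB ⁅⁅(a : L), (b : L)⁆, (b' : L)⁆ + prB ⁅(b : L), ⁅(a : L), (b' : L)⁆⁆ := by
    rw [hbb, hext]
    have hco : ((⟨⁅(b : L), (b' : L)⁆, hmem⟩ : B) : L) = ⁅(b : L), (b' : L)⁆ := rfl
    rw [hco, show ⁅(a : L), ⁅(b : L), (b' : L)⁆⁆
        = ⁅⁅(a : L), (b : L)⁆, (b' : L)⁆ + ⁅(b : L), ⁅(a : L), (b' : L)⁆⁆ from
      leibniz_lie _ _ _, map_add]
  have eq5 : prB ⁅⁅(a : L), (b' : L)⁆, (b : L)⁆ = - prB ⁅(b : L), ⁅(a : L), (b' : L)⁆⁆ := by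
    rw [← lie_skew, map_neg]
  rw [hR, hR]
  simp only [LinearMap.sub_apply, Module.End.mul_apply]
  rw [eq1, eq2, eq3, map_add, eq4, eq5]
  abel
end
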